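/- With the same hypotheses (locally finite partition by locally closed connected sets with the frontier condition and strictly decreasing dimension on the boundary), the union of all maximal strata (the regular part) is open and dense in M. -/

import Mathlib

/-- For a stratification (a locally finite partition into locally closed connected
pieces satisfying the frontier condition with strictly decreasing dimension), the
regular part, i.e. the union of all maximal strata, is open and dense. -/
theorem regular_part_isOpen_dense
    {M : Type*} [TopologicalSpace M] [T2Space M]
    (𝒮 : Set (Set M)) (d : Set M → ℕ)
    (hne : ∀ S ∈ 𝒮, S.Nonempty)
    (hdisj : ∀ S ∈ 𝒮, ∀ T ∈ 𝒮, S ≠ T → Disjoint S T)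
    (hcover : ⋃₀ 𝒮 = Set.univ)
    (hlc : ∀ S ∈ 𝒮, IsLocallyClosed S)
    (hconn : ∀ S ∈ 𝒮, IsConnected S)
    (hlf : ∀ x : M, ∃ U ∈ nhds x, {S ∈ 𝒮 | (S ∩ U).Nonempty}.Finite)
    (hfrontier : ∀ S ∈ 𝒮, ∀ T ∈ 𝒮, S ≠ T → (S ∩ closure T).Nonempty →
      S ⊆ closure T ∧ d S < d T) :
    IsOpen (⋃₀ {S ∈ 𝒮 | ∀ T ∈ 𝒮, S ⊆ closure T → S = T}) ∧
      Dense (⋃₀ {S ∈ 𝒮 | ∀ T ∈ 𝒮, S ⊆ closure T → S = T}) := by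
  constructor
  · -- openness
    rw [isOpen_iff_mem_nhds]
    rintro x hx
    obtain ⟨S, ⟨hS, hmax⟩, hxS⟩ := hx
    obtain ⟨U, hU, hF⟩ := hlf x
    set G : Set (Set M) := {T ∈ 𝒮 | (T ∩ U).Nonempty} \ {S} with hG
    have hGfin : G.Finite := hF.diff
    -- x is not in the closure of any T ∈ G
    have hxnot : ∀ T ∈ G, x ∈ (closure T)ᶜ := by
      rintro T ⟨⟨hT, -⟩, hTS⟩ hxcl
      have hST : S ≠ T := fun h => hTS (h ▸ rfl)
      have := (hfrontier S hS T hT hST ⟨x, hxS, hxcl⟩).1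
      exact hST (hmax T hT this)
    have hV : (U ∩ ⋂ T ∈ G, (closure T)ᶜ) ∈ nhds x := by
      refine Filter.inter_mem hU ((Filter.biInter_mem hGfin).2 ?_)
      intro T hT
      exact (isClosed_closure.isOpen_compl).mem_nhds (hxnot T hT)
    refine Filter.mem_of_superset hV ?_
    rintro y ⟨hyU, hyI⟩
    have : y ∈ ⋃₀ 𝒮 := hcover ▸ Set.mem_univ y
    obtain ⟨T, hT, hyT⟩ := this
    by_cases hTS : T = S
    · exact ⟨S, ⟨hS, hmax⟩, hTS ▸ hyT⟩
    · have hTG : T ∈ G := ⟨⟨hT, ⟨y, hyT, hyU⟩⟩, hTS⟩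
      exact absurd (subset_closure hyT) (Set.mem_iInter₂.1 hyI T hTG)
  · -- density
    rw [dense_iff_inter_open]
    intro V hV hVne
    obtain ⟨x, hxV⟩ := hVne
    obtain ⟨U, hU, hF⟩ := hlf x
    -- strata whose closure contains x
    set C : Set (Set M) := {T ∈ 𝒮 | x ∈ closure T} with hC
    have hCsub : C ⊆ {T ∈ 𝒮 | (T ∩ U).Nonempty} := by
      rintro T ⟨hT, hxcl⟩
      refine ⟨hT, ?_⟩
      obtain ⟨y, hyU, hyT⟩ := mem_closure_iff_nhds.1 hxcl U hU
      exact ⟨y, hyT, hyU⟩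
    have hCfin : C.Finite := hF.subset hCsub
    have hCne : C.Nonempty := by
      have : x ∈ ⋃₀ 𝒮 := hcover ▸ Set.mem_univ x
      obtain ⟨S, hS, hxS⟩ := this
      exact ⟨S, hS, subset_closure hxS⟩
    obtain ⟨T, hTC, hTmax⟩ := hCfin.exists_maximalFor d C hCne
    -- T is a maximal stratum
    have hTstrat : T ∈ 𝒮 := hTC.1
    have hmax : ∀ T' ∈ 𝒮, T ⊆ closure T' → T = T' := by
      intro T' hT' hsub
      by_contra hne'
      obtain ⟨z, hz⟩ := hne T hTstrat
      have hlt := (hfrontier T hTstrat T' hT' hne' ⟨z, hz, hsub hz⟩).2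
      have hxcl' : x ∈ closure T' :=
        closure_minimal hsub isClosed_closure hTC.2
      have := hTmax ⟨hT', hxcl'⟩ (le_of_lt hlt)
      omega
    -- x ∈ closure T, so V meets T
    obtain ⟨y, hyV, hyT⟩ := mem_closure_iff_nhds.1 hTC.2 V (hV.mem_nhds hxV)
    exact ⟨y, hyV, T, ⟨hTstrat, hmax⟩, hyT⟩
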